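/- If a sequence x ∈ A^ℕ is not normal, then there exist an integer k ≥ 1 and an injective map c from A^k to a prefix-free set C of words over {0,1} (or over A) such that liminf_{n→∞} |c(x[1..k]) c(x[k+1..2k]) ⋯ c(x[(n-1)k+1..nk])| / (nk) < 1, i.e., block-coding by c compresses x. -/

import Mathlib

open Filter Topology

def pref {A : Type*} (x : ℕ → A) (n : ℕ) : List A := (List.range n).map x

/-- Number of occurrences of `u` in `w` (as a factor). -/
noncomputable def occ {A : Type*} (w u : List A) : ℕ :=
  {i : ℕ | i + u.length ≤ w.length ∧ (w.drop i).take u.length = u}.ncard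

/-- A sequence `x ∈ A^ℕ` is normal if every finite word occurs in its prefixes with
limiting frequency `(#A)^{-|w|}`. -/
def IsNormal {A : Type*} [Fintype A] (x : ℕ → A) : Prop :=
  ∀ w : List A,
    Tendsto (fun n => (occ (pref x n) w : ℝ) / n) atTop
      (nhds (((Fintype.card A : ℝ) ^ w.length)⁻¹))

section Aux
open Finset
/-- counting function -/
noncomputable def cnt (p : ℕ → Prop) (r : ℕ) : ℕ :=
  letI := Classical.decPred p
  ∑ i ∈ Finset.range r, if p i then 1 else 0

lemma cnt_eq_card (p : ℕ → Prop) [DecidablePred p] (r : ℕ) :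
    cnt p r = ((Finset.range r).filter p).card := by
  rw [Finset.card_filter, cnt]
  exact Finset.sum_congr rfl (fun i _ => by split <;> rfl)

lemma cnt_le (p : ℕ → Prop) (r : ℕ) : cnt p r ≤ r := by
  classical
  rw [cnt_eq_card]
  exact le_trans (Finset.card_filter_le _ _) (by simp)

lemma cnt_mono (p : ℕ → Prop) {r s : ℕ} (h : r ≤ s) : cnt p r ≤ cnt p s := by
  classical
  rw [cnt_eq_card, cnt_eq_card]
  exact Finset.card_le_card (Finset.filter_subset_filter _ (Finset.range_subset_range.2 h))

lemma cnt_sub_le (p : ℕ → Prop) (r s : ℕ) : cnt p s - cnt p r ≤ s - r := by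
  classical
  rcases le_total s r with h | h
  · have := cnt_mono p h; omega
  · classical
    rw [cnt_eq_card, cnt_eq_card, show s = r + (s - r) by omega, Finset.range_add, Finset.filter_union, Finset.card_union_of_disjoint (Finset.disjoint_filter_filter (by simp [Finset.disjoint_left]; omega))]
    have : ((Finset.filter p ((Finset.range (s-r)).map (addLeftEmbedding r)))).card ≤ s - r := by
      calc _ ≤ ((Finset.range (s-r)).map (addLeftEmbedding r)).card := Finset.card_filter_le _ _
        _ = s - r := by simp
    omega

lemma getElem_pref {A : Type*} (x : ℕ → A) (n i : ℕ) (h : i < (pref x n).length) :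
    (pref x n)[i] = x i := by
  simp [pref]

lemma length_pref {A : Type*} (x : ℕ → A) (n : ℕ) : (pref x n).length = n := by simp [pref]

lemma occ_eq_cnt {A : Type*} (x : ℕ → A) (w : List A) (d : A) (n : ℕ)
    (hl : 1 ≤ w.length) (hn : w.length ≤ n) :
    occ (pref x n) w = cnt (fun i => ∀ t < w.length, x (i + t) = w.getD t d) (n - w.length + 1) := by
  classical
  rw [cnt_eq_card, occ, show {i : ℕ | i + w.length ≤ (pref x n).length ∧ ((pref x n).drop i).take w.length = w}
      = ↑((Finset.range (n - w.length + 1)).filter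
          (fun i => ∀ t < w.length, x (i + t) = w.getD t d)) from ?_, Set.ncard_coe_finset]
  ext i
  simp only [Set.mem_setOf_eq, Finset.coe_filter, Finset.mem_range, length_pref]
  constructor
  · rintro ⟨h1, h2⟩
    refine ⟨by omega, fun t ht => ?_⟩
    have := congrArg (fun l => l[t]?) h2
    simp only [List.getElem?_take, List.getElem?_drop] at this
    rw [List.getD_eq_getElem w d (by omega)]
    have hlt : i + t < (pref x n).length := by rw [length_pref]; omega
    rw [List.getElem?_eq_getElem hlt] at this
    simp only [ht, if_pos] at this
    rw [getElem_pref] at this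
    have := this.symm
    rw [List.getElem?_eq_getElem (by omega)] at this
    exact (Option.some.injEq _ _).mp this |>.symm
  · rintro ⟨h1, h2⟩
    have h1' : i + w.length ≤ n := by omega
    refine ⟨by omega, ?_⟩
    apply List.ext_getElem
    · simp [length_pref]; omega
    · intro t ht1 ht2
      simp only [List.getElem_take, List.getElem_drop, getElem_pref]
      rw [← List.getD_eq_getElem w d ht2]
      exact h2 t (by simpa using ht2)

lemma sum_range_mul_split {M : Type*} [AddCommMonoid M] (m k : ℕ) (f : ℕ → M) :
    ∑ i ∈ range (m*k), f i = ∑ j ∈ range m, ∑ i ∈ range k, f (j*k+i) := by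
  induction m with
  | zero => simp
  | succ m ih =>
    rw [Nat.succ_mul, Finset.range_add, Finset.sum_union (by simp [Finset.disjoint_left]; omega),
      ih, Finset.sum_map, Finset.sum_range_succ]
    simp [addLeftEmbedding]

/-- extend a function on `Fin k` to `ℕ` -/
def vext {A : Type*} (d : A) {k : ℕ} (v : Fin k → A) : ℕ → A :=
  fun t => if h : t < k then v ⟨t, h⟩ else d

lemma card_cylinder {A : Type*} [Fintype A] (d : A) (k : ℕ) (S : Finset ℕ)
    (hS : ∀ t ∈ S, t < k) (g : ℕ → A) :
    letI := Classical.decEq A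
    (Finset.univ.filter (fun v : Fin k → A => ∀ t ∈ S, vext d v t = g t)).card
      = (Fintype.card A) ^ (k - S.card) := by
  classical
  have hfe : (Finset.univ.filter (fun v : Fin k → A => ∀ t ∈ S, vext d v t = g t))
      = Fintype.piFinset (fun j : Fin k => if (j : ℕ) ∈ S then {g (j : ℕ)} else Finset.univ) := by
    ext v
    simp only [Finset.mem_filter, Finset.mem_univ, true_and, Fintype.mem_piFinset]
    constructor
    · intro h j
      by_cases hj : (j : ℕ) ∈ S
      · simp only [hj, if_pos, Finset.mem_singleton]
        have := h (j : ℕ) hj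
        rwa [vext, dif_pos j.isLt, Fin.eta] at this
      · simp [hj]
    · intro h t ht
      have hk := hS t ht
      have := h ⟨t, hk⟩
      simp only [ht, if_pos, Finset.mem_singleton] at this
      rwa [vext, dif_pos hk]
  rw [hfe, Fintype.card_piFinset]
  have : ∀ j : Fin k, ((if (j : ℕ) ∈ S then ({g (j : ℕ)} : Finset A) else Finset.univ)).card
      = if (j : ℕ) ∈ S then 1 else Fintype.card A := by
    intro j; split <;> simp [Finset.card_univ]
  rw [Finset.prod_congr rfl (fun j _ => this j)]
  rw [← Finset.prod_filter_mul_prod_filter_not Finset.univ (fun j : Fin k => (j : ℕ) ∈ S)]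
  rw [Finset.prod_ite_of_true (fun j hj => (Finset.mem_filter.1 hj).2) (f := fun _ => (1:ℕ)),
    Finset.prod_ite_of_false (fun j hj => (Finset.mem_filter.1 hj).2) (f := fun _ => (1:ℕ))]
  simp only [Finset.prod_const, one_pow, one_mul]
  congr 1
  have hcard : (Finset.univ.filter (fun j : Fin k => (j : ℕ) ∈ S)).card = S.card := by
    refine Finset.card_nbij (i := fun j : Fin k => (j : ℕ))
      (fun a ha => (Finset.mem_filter.1 ha).2)
      (fun a _ b _ hab => Fin.val_injective hab)
      (fun t ht => ?_)
    simp only [Finset.coe_filter, Finset.mem_coe] at ht ⊢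
    exact ⟨⟨t, hS t ht⟩, by simpa using ht, rfl⟩
  have := Finset.card_filter_add_card_filter_not
    (s := (Finset.univ : Finset (Fin k))) (p := fun j : Fin k => (j : ℕ) ∈ S)
  rw [hcard] at this
  simp only [Finset.card_univ, Fintype.card_fin] at this
  omega

lemma cnt_eq_sum (p : ℕ → Prop) [DecidablePred p] (r : ℕ) :
    cnt p r = ∑ i ∈ Finset.range r, if p i then 1 else 0 := by
  rw [cnt]
  refine Finset.sum_congr rfl fun i _ => ?_
  by_cases h : p i <;> simp [h]

lemma sum_indicator_eq_natcard {V : Type*} [Fintype V] (p : V → Prop) [DecidablePred p] :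
    ∑ v : V, (if p v then 1 else 0) = Nat.card {v : V // p v} := by
  rw [← Finset.card_filter, Nat.card_eq_fintype_card, Fintype.card_subtype]

lemma natcard_cylinder {A : Type*} [Fintype A] (d : A) (k : ℕ) (S : Finset ℕ)
    (hS : ∀ t ∈ S, t < k) (g : ℕ → A) :
    Nat.card {v : Fin k → A // ∀ t ∈ S, vext d v t = g t}
      = (Fintype.card A) ^ (k - S.card) := by
  classical
  rw [Nat.card_eq_fintype_card, Fintype.card_subtype]
  exact card_cylinder d k S hS g

lemma natcard_le_of_imp {V : Type*} [Fintype V] {p q : V → Prop} (h : ∀ v, p v → q v) :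
    Nat.card {v : V // p v} ≤ Nat.card {v : V // q v} := by
  classical
  exact Nat.card_le_card_of_injective (fun a => ⟨a.1, h a.1 a.2⟩)
    (fun a b hab => by
      have h2 := congrArg Subtype.val hab
      exact Subtype.ext h2)

/-- matching predicate: word given by `wg` (length `ℓ`) occurs at position `i` in `y` -/
def matc {A : Type*} (wg : ℕ → A) (ℓ : ℕ) (y : ℕ → A) (i : ℕ) : Prop :=
  ∀ t < ℓ, y (i + t) = wg t

noncomputable def phi {A : Type*} (d : A) (wg : ℕ → A) (ℓ k : ℕ) (v : Fin k → A) : ℕ :=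
  cnt (matc wg ℓ (vext d v)) (k - ℓ + 1)

section moments
variable {A : Type*} [Fintype A] (d : A) (wg : ℕ → A) (ℓ k : ℕ)

lemma natcard_match (hl : 1 ≤ ℓ) {i : ℕ} (hi : i + ℓ ≤ k) :
    Nat.card {v : Fin k → A // matc wg ℓ (vext d v) i}
      = (Fintype.card A) ^ (k - ℓ) := by
  have h := natcard_cylinder d k (Finset.Ico i (i + ℓ)) (fun t ht => by
    simp only [Finset.mem_Ico] at ht; omega) (fun t => wg (t - i))
  simp only [Nat.card_Ico, Nat.add_sub_cancel_left] at h
  rw [← h]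
  apply Nat.card_congr
  apply Equiv.subtypeEquivRight
  intro v
  constructor
  · intro hm t ht
    simp only [Finset.mem_Ico] at ht
    have := hm (t - i) (by omega)
    rwa [show i + (t - i) = t by omega] at this
  · intro hm t ht
    have := hm (i + t) (Finset.mem_Ico.2 ⟨by omega, by omega⟩)
    rwa [Nat.add_sub_cancel_left] at this

lemma natcard_match_two (hl : 1 ≤ ℓ) {i i' : ℕ} (hii : i + ℓ ≤ i') (hi' : i' + ℓ ≤ k) :
    Nat.card {v : Fin k → A //
        matc wg ℓ (vext d v) i ∧ matc wg ℓ (vext d v) i'}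
      ≤ (Fintype.card A) ^ (k - 2 * ℓ) := by
  classical
  set S : Finset ℕ := Finset.Ico i (i + ℓ) ∪ Finset.Ico i' (i' + ℓ) with hSdef
  have hcardS : S.card = 2 * ℓ := by
    rw [hSdef, Finset.card_union_of_disjoint (by
      simp only [Finset.disjoint_left, Finset.mem_Ico]; intro a ha; omega)]
    simp only [Nat.card_Ico]; omega
  have h := natcard_cylinder d k S (fun t ht => by
    simp only [hSdef, Finset.mem_union, Finset.mem_Ico] at ht; omega)
    (fun t => if t < i + ℓ then wg (t - i) else wg (t - i'))
  rw [hcardS] at h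
  rw [← h]
  apply natcard_le_of_imp
  rintro v ⟨hm1, hm2⟩ t ht
  simp only [hSdef, Finset.mem_union, Finset.mem_Ico] at ht
  rcases ht with ht | ht
  · rw [if_pos (by omega)]
    have := hm1 (t - i) (by omega)
    rwa [show i + (t - i) = t by omega] at this
  · rw [if_neg (by omega)]
    have := hm2 (t - i') (by omega)
    rwa [show i' + (t - i') = t by omega] at this

lemma sum_phi (hl : 1 ≤ ℓ) (hk : ℓ ≤ k) :
    ∑ v : Fin k → A, phi d wg ℓ k v = (k - ℓ + 1) * (Fintype.card A) ^ (k - ℓ) := by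
  classical
  have hphi : ∀ v : Fin k → A, phi d wg ℓ k v
      = ∑ i ∈ Finset.range (k - ℓ + 1), if matc wg ℓ (vext d v) i then 1 else 0 := by
    intro v
    rw [phi, cnt_eq_sum]
  rw [Finset.sum_congr rfl (fun v _ => hphi v), Finset.sum_comm]
  have hterm : ∀ i ∈ Finset.range (k - ℓ + 1),
      (∑ v : Fin k → A, if matc wg ℓ (vext d v) i then 1 else 0)
        = (Fintype.card A) ^ (k - ℓ) := by
    intro i hi
    rw [sum_indicator_eq_natcard]
    exact natcard_match d wg ℓ k hl (by simp only [Finset.mem_range] at hi; omega)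
  rw [Finset.sum_congr rfl hterm]
  simp [mul_comm]

lemma sum_phi_sq (hl : 1 ≤ ℓ) (hk : 2 * ℓ ≤ k) :
    ∑ v : Fin k → A, (phi d wg ℓ k v) * (phi d wg ℓ k v)
      ≤ (k - ℓ + 1) * (k - ℓ + 1) * (Fintype.card A) ^ (k - 2 * ℓ)
        + (k - ℓ + 1) * (2 * ℓ) * (Fintype.card A) ^ (k - ℓ) := by
  classical
  set r := k - ℓ + 1 with hr
  have expand : ∀ v : Fin k → A, (phi d wg ℓ k v) * (phi d wg ℓ k v)
      = ∑ i ∈ Finset.range r, ∑ i' ∈ Finset.range r,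
          if (matc wg ℓ (vext d v) i ∧ matc wg ℓ (vext d v) i') then 1 else 0 := by
    intro v
    have h1 : phi d wg ℓ k v
        = ∑ i ∈ Finset.range r, if matc wg ℓ (vext d v) i then 1 else 0 := by
      rw [phi, cnt_eq_sum]
    rw [h1, Finset.sum_mul_sum]
    refine Finset.sum_congr rfl (fun i _ => Finset.sum_congr rfl (fun i' _ => ?_))
    by_cases hp : matc wg ℓ (vext d v) i <;> by_cases hq : matc wg ℓ (vext d v) i' <;>
      simp [hp, hq]
  rw [Finset.sum_congr rfl (fun v _ => expand v), Finset.sum_comm]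
  have swap2 : ∀ i ∈ Finset.range r,
      (∑ v : Fin k → A, ∑ i' ∈ Finset.range r,
        if (matc wg ℓ (vext d v) i ∧ matc wg ℓ (vext d v) i') then 1 else 0)
      = ∑ i' ∈ Finset.range r, Nat.card {v : Fin k → A //
          matc wg ℓ (vext d v) i ∧ matc wg ℓ (vext d v) i'} := by
    intro i _
    rw [Finset.sum_comm]
    exact Finset.sum_congr rfl (fun i' _ => sum_indicator_eq_natcard _)
  rw [Finset.sum_congr rfl swap2]
  have hbound : ∀ i ∈ Finset.range r, ∀ i' ∈ Finset.range r,
      Nat.card {v : Fin k → A // matc wg ℓ (vext d v) i ∧ matc wg ℓ (vext d v) i'}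
      ≤ (Fintype.card A) ^ (k - 2 * ℓ) + if (i < i' + ℓ ∧ i' < i + ℓ) then (Fintype.card A) ^ (k - ℓ) else 0 := by
    intro i hi i' hi'
    simp only [Finset.mem_range] at hi hi'
    by_cases hnear : i < i' + ℓ ∧ i' < i + ℓ
    · rw [if_pos hnear]
      have hle : Nat.card {v : Fin k → A // matc wg ℓ (vext d v) i ∧ matc wg ℓ (vext d v) i'}
          ≤ Nat.card {v : Fin k → A // matc wg ℓ (vext d v) i} :=
        natcard_le_of_imp (fun v hv => hv.1)
      rw [natcard_match d wg ℓ k hl (by omega)] at hle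
      omega
    · rw [if_neg hnear, add_zero]
      rcases (by omega : i + ℓ ≤ i' ∨ i' + ℓ ≤ i) with hc | hc
      · exact natcard_match_two d wg ℓ k hl hc (by omega)
      · have hcongr : Nat.card {v : Fin k → A //
            matc wg ℓ (vext d v) i ∧ matc wg ℓ (vext d v) i'}
            = Nat.card {v : Fin k → A //
            matc wg ℓ (vext d v) i' ∧ matc wg ℓ (vext d v) i} := by
          apply Nat.card_congr
          exact Equiv.subtypeEquivRight (fun v => and_comm)
        rw [hcongr]
        exact natcard_match_two d wg ℓ k hl hc (by omega)
  calc ∑ i ∈ Finset.range r, ∑ i' ∈ Finset.range r,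
        Nat.card {v : Fin k → A // matc wg ℓ (vext d v) i ∧ matc wg ℓ (vext d v) i'}
      ≤ ∑ i ∈ Finset.range r, ∑ i' ∈ Finset.range r,
        ((Fintype.card A) ^ (k - 2 * ℓ) + if (i < i' + ℓ ∧ i' < i + ℓ) then (Fintype.card A) ^ (k - ℓ) else 0) :=
        Finset.sum_le_sum (fun i hi => Finset.sum_le_sum (fun i' hi' => hbound i hi i' hi'))
    _ ≤ r * r * (Fintype.card A) ^ (k - 2 * ℓ) + r * (2 * ℓ) * (Fintype.card A) ^ (k - ℓ) := by
        rw [Finset.sum_congr rfl (fun i _ => Finset.sum_add_distrib), Finset.sum_add_distrib]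
        have hA : ∑ _i ∈ Finset.range r, ∑ _i' ∈ Finset.range r, (Fintype.card A) ^ (k - 2*ℓ)
            = r * r * (Fintype.card A) ^ (k - 2*ℓ) := by
          simp only [Finset.sum_const, Finset.card_range, smul_eq_mul]; ring
        have hinner : ∀ i ∈ Finset.range r,
            (∑ i' ∈ Finset.range r, if (i < i' + ℓ ∧ i' < i + ℓ) then (Fintype.card A) ^ (k - ℓ) else 0)
            ≤ (2 * ℓ) * (Fintype.card A) ^ (k - ℓ) := by
          intro i _
          rw [← Finset.sum_filter]
          rw [Finset.sum_const, smul_eq_mul]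
          have hsub : ((Finset.range r).filter (fun i' => i < i' + ℓ ∧ i' < i + ℓ)).card
              ≤ 2 * ℓ := by
            have hss : ((Finset.range r).filter (fun i' => i < i' + ℓ ∧ i' < i + ℓ))
                ⊆ Finset.Ico (i + 1 - ℓ) (i + ℓ) := by
              intro a ha
              simp only [Finset.mem_filter, Finset.mem_range, Finset.mem_Ico] at ha ⊢
              omega
            have := Finset.card_le_card hss
            simp only [Nat.card_Ico] at this
            omega
          exact Nat.mul_le_mul_right _ hsub
        have hB : (∑ i ∈ Finset.range r,
            (∑ i' ∈ Finset.range r, if (i < i' + ℓ ∧ i' < i + ℓ) then (Fintype.card A) ^ (k - ℓ) else 0))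
            ≤ r * ((2 * ℓ) * (Fintype.card A) ^ (k - ℓ)) := by
          calc _ ≤ ∑ _i ∈ Finset.range r, (2 * ℓ) * (Fintype.card A) ^ (k - ℓ) := Finset.sum_le_sum hinner
            _ = r * ((2 * ℓ) * (Fintype.card A) ^ (k - ℓ)) := by
                simp only [Finset.sum_const, Finset.card_range, smul_eq_mul]
        rw [hA]
        have : r * ((2 * ℓ) * (Fintype.card A) ^ (k - ℓ)) = r * (2 * ℓ) * (Fintype.card A) ^ (k - ℓ) := by ring
        omega

end moments

lemma card_mul_le_sum {V : Type*} [Fintype V] (p : V → Prop) (f : V → ℝ) (c : ℝ)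
    (hf : ∀ v, 0 ≤ f v) (hp : ∀ v, p v → c ≤ f v) (hc : 0 ≤ c) :
    (Nat.card {v : V // p v} : ℝ) * c ≤ ∑ v : V, f v := by
  classical
  rw [Nat.card_eq_fintype_card, Fintype.card_subtype]
  calc ((Finset.univ.filter p).card : ℝ) * c = ∑ _v ∈ Finset.univ.filter p, c := by
        rw [Finset.sum_const, nsmul_eq_mul]
    _ ≤ ∑ v ∈ Finset.univ.filter p, f v :=
        Finset.sum_le_sum (fun v hv => hp v (Finset.mem_filter.1 hv).2)
    _ ≤ ∑ v : V, f v := Finset.sum_le_sum_of_subset_of_nonneg (Finset.filter_subset _ _)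
        (fun v _ _ => hf v)

lemma card_dev_le {A : Type*} [Fintype A] [Nonempty A] (d : A) (wg : ℕ → A) (ℓ k s : ℕ)
    (δ : ℝ) (hl : 1 ≤ ℓ) (hk2 : 2 * ℓ ≤ k) (hsk : s ≤ k) (hδ : 0 < δ) (hk1 : 1 ≤ k)
    (hkbig : 2 * ℓ * (Fintype.card A : ℝ) ^ s ≤ δ ^ 2 * k) :
    Nat.card {v : Fin k → A //
        δ * k ≤ |(phi d wg ℓ k v : ℝ) - ((k - ℓ + 1 : ℕ) : ℝ) / (Fintype.card A : ℝ) ^ ℓ|}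
      ≤ (Fintype.card A) ^ (k - s) := by
  classical
  set q : ℝ := (Fintype.card A : ℝ) with hqdef
  have hq1 : (1 : ℝ) ≤ q := by
    rw [hqdef]; exact_mod_cast Fintype.card_pos
  have hq0 : (0 : ℝ) < q := lt_of_lt_of_le one_pos hq1
  set r : ℕ := k - ℓ + 1 with hrdef
  set E : ℝ := (r : ℝ) / q ^ ℓ with hEdef
  set Q1 : ℝ := ((Fintype.card A ^ (k - ℓ) : ℕ) : ℝ) with hQ1
  set Q2 : ℝ := ((Fintype.card A ^ (k - 2 * ℓ) : ℕ) : ℝ) with hQ2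
  have hQ1eq : Q1 = Q2 * q ^ ℓ := by
    rw [hQ1, hQ2, hqdef]
    push_cast
    rw [← pow_add]
    congr 1
    omega
  have hQk : (Fintype.card (Fin k → A) : ℝ) = Q2 * q ^ ℓ * q ^ ℓ := by
    rw [Fintype.card_fun, Fintype.card_fin, hQ2, hqdef]
    push_cast
    rw [← pow_add, ← pow_add]
    congr 1
    omega
  -- variance bound
  have hvar : ∑ v : Fin k → A, ((phi d wg ℓ k v : ℝ) - E) ^ 2 ≤ 2 * ℓ * r * Q1 := by
    have hsum : ∑ v : Fin k → A, (phi d wg ℓ k v : ℝ) = r * Q1 := by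
      rw [← Nat.cast_sum, sum_phi d wg ℓ k hl (by omega), hrdef]
      push_cast [hQ1]
      ring
    have hsumsq : ∑ v : Fin k → A, ((phi d wg ℓ k v : ℝ)) ^ 2
        ≤ r * r * Q2 + r * (2 * ℓ) * Q1 := by
      have hn := sum_phi_sq d wg ℓ k hl hk2
      have := (Nat.cast_le (α := ℝ)).2 hn
      push_cast at this
      calc ∑ v : Fin k → A, ((phi d wg ℓ k v : ℝ)) ^ 2
          = ∑ v : Fin k → A, ((phi d wg ℓ k v : ℝ)) * ((phi d wg ℓ k v : ℝ)) := by
            refine Finset.sum_congr rfl (fun v _ => by ring)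
        _ ≤ _ := by
            rw [hQ1, hQ2, hrdef]
            push_cast
            convert this using 2 <;> push_cast <;> ring
    have hexp : ∑ v : Fin k → A, ((phi d wg ℓ k v : ℝ) - E) ^ 2
        = (∑ v : Fin k → A, ((phi d wg ℓ k v : ℝ)) ^ 2)
          - 2 * E * (∑ v : Fin k → A, (phi d wg ℓ k v : ℝ))
          + (Fintype.card (Fin k → A) : ℝ) * E ^ 2 := by
      rw [Finset.mul_sum, ← Finset.sum_sub_distrib]
      have hconst : (Fintype.card (Fin k → A) : ℝ) * E ^ 2
          = ∑ _v : Fin k → A, E ^ 2 := by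
        rw [Finset.sum_const, Finset.card_univ, nsmul_eq_mul]
      rw [hconst, ← Finset.sum_add_distrib]
      exact Finset.sum_congr rfl (fun v _ => by ring)
    rw [hexp, hsum, hQk]
    have hqlpos : (0:ℝ) < q ^ ℓ := pow_pos hq0 ℓ
    have hE : E * q ^ ℓ = r := by
      rw [hEdef]; field_simp
    calc (∑ v : Fin k → A, ((phi d wg ℓ k v : ℝ)) ^ 2) - 2 * E * (r * Q1)
          + Q2 * q ^ ℓ * q ^ ℓ * E ^ 2
        ≤ (r * r * Q2 + r * (2 * ℓ) * Q1) - 2 * E * (r * Q1)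
          + Q2 * q ^ ℓ * q ^ ℓ * E ^ 2 := by linarith
      _ = 2 * ℓ * r * Q1 := by
          rw [hQ1eq]
          have : E = r / q ^ ℓ := hEdef
          rw [this]
          field_simp
          ring
  -- chebyshev
  have hcheb : (Nat.card {v : Fin k → A //
      δ * k ≤ |(phi d wg ℓ k v : ℝ) - ((k - ℓ + 1 : ℕ) : ℝ) / q ^ ℓ|} : ℝ) * (δ * k) ^ 2
      ≤ 2 * ℓ * r * Q1 := by
    refine le_trans (card_mul_le_sum _ _ _ (fun v => sq_nonneg _) (fun v hv => ?_)
      (sq_nonneg _)) hvar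
    have h1 : |(phi d wg ℓ k v : ℝ) - E| ^ 2 = ((phi d wg ℓ k v : ℝ) - E) ^ 2 := sq_abs _
    have h2 : (0:ℝ) ≤ δ * k := by positivity
    calc (δ * k) ^ 2 ≤ |(phi d wg ℓ k v : ℝ) - E| ^ 2 := by
          apply pow_le_pow_left₀ h2 hv
      _ = _ := h1
  -- conclude
  have hfin : (Nat.card {v : Fin k → A //
      δ * k ≤ |(phi d wg ℓ k v : ℝ) - ((k - ℓ + 1 : ℕ) : ℝ) / q ^ ℓ|} : ℝ)
      ≤ ((Fintype.card A ^ (k - s) : ℕ) : ℝ) := by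
    have hkpos : (0:ℝ) < (k:ℝ) := by exact_mod_cast hk1
    have hpos : (0:ℝ) < (δ * k) ^ 2 := by positivity
    rw [← mul_le_mul_iff_left₀ hpos]
    refine le_trans hcheb ?_
    -- 2ℓ r Q1 ≤ q^{k-s} δ² k²
    have hrk' : r ≤ k := by omega
    have hrk : (r : ℝ) ≤ k := by exact_mod_cast hrk'
    set Qks : ℝ := ((Fintype.card A ^ (k - s) : ℕ) : ℝ) with hQks
    have hQksnn : (0:ℝ) ≤ Qks := by rw [hQks]; positivity
    have hQ1' : Q1 ≤ q ^ s * Qks := by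
      rw [hQ1, hQks, hqdef]
      push_cast
      calc ((Fintype.card A : ℝ)) ^ (k - ℓ) ≤ (Fintype.card A : ℝ) ^ k :=
            pow_le_pow_right₀ hq1 (by omega)
        _ = (Fintype.card A : ℝ) ^ s * (Fintype.card A : ℝ) ^ (k - s) := by
            rw [← pow_add]; congr 1; omega
    have h1 : 2 * (ℓ:ℝ) * Q1 ≤ δ ^ 2 * k * Qks := by
      calc 2 * (ℓ:ℝ) * Q1 ≤ 2 * ℓ * (q ^ s * Qks) := by
            apply mul_le_mul_of_nonneg_left hQ1' (by positivity)
        _ = (2 * ℓ * q ^ s) * Qks := by ring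
        _ ≤ (δ ^ 2 * k) * Qks := mul_le_mul_of_nonneg_right hkbig hQksnn
    calc 2 * (ℓ:ℝ) * r * Q1 = (2 * ℓ * Q1) * r := by ring
      _ ≤ (δ ^ 2 * k * Qks) * r := mul_le_mul_of_nonneg_right h1 (Nat.cast_nonneg r)
      _ ≤ (δ ^ 2 * k * Qks) * k := by
          apply mul_le_mul_of_nonneg_left hrk (by positivity)
      _ = Qks * (δ * k) ^ 2 := by ring
  exact_mod_cast hfin

lemma cnt_congr {p q : ℕ → Prop} {r : ℕ} (h : ∀ i < r, (p i ↔ q i)) : cnt p r = cnt q r := by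
  classical
  rw [cnt_eq_sum, cnt_eq_sum]
  refine Finset.sum_congr rfl fun i hi => ?_
  have := h i (Finset.mem_range.1 hi)
  by_cases hp : p i
  · rw [if_pos hp, if_pos (this.1 hp)]
  · rw [if_neg hp, if_neg (fun hq => hp (this.2 hq))]

lemma cnt_mul_split (p : ℕ → Prop) (m k : ℕ) :
    cnt p (m * k) = ∑ j ∈ Finset.range m, cnt (fun i => p (j * k + i)) k := by
  classical
  rw [cnt]
  rw [sum_range_mul_split]
  refine Finset.sum_congr rfl fun j _ => ?_
  rw [cnt]

end Aux
lemma occ_nil {A : Type*} (x : ℕ → A) (n : ℕ) : occ (pref x n) ([] : List A) = n + 1 := by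
  rw [occ]
  have h : {i : ℕ | i + (List.length ([] : List A)) ≤ (pref x n).length ∧
      (((pref x n).drop i).take (List.length ([] : List A)) = ([] : List A))}
      = ↑(Finset.range (n+1)) := by
    ext i
    simp [length_pref, Nat.lt_succ_iff]
  rw [h, Set.ncard_coe_finset, Finset.card_range]

set_option maxHeartbeats 2000000 in
theorem not_normal_compressible {A : Type*} [Fintype A] (x : ℕ → A)
    (hx : ¬ IsNormal x) :
    ∃ k ≥ 1, ∃ c : List A → List A,
      (∀ u v : List A, u.length = k → v.length = k → c u = c v → u = v) ∧
      (∀ u v : List A, u.length = k → v.length = k → c u <+: c v → c u = c v) ∧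
      Filter.liminf
        (fun n : ℕ =>
          ((∑ j ∈ Finset.range n,
              (c ((List.range k).map (fun i => x (j * k + i)))).length : ℝ)) / (n * k))
        atTop < 1 := by
  classical
  by_cases hA : Fintype.card A ≤ 1
  · -- degenerate alphabet
    have hsub : Subsingleton A := Fintype.card_le_one_iff_subsingleton.mp hA
    refine ⟨1, le_refl 1, fun _ => [], ?_, ?_, ?_⟩
    · intro u v hu hv _
      apply List.ext_getElem (hu.trans hv.symm)
      intro i h1 h2
      exact Subsingleton.elim _ _
    · intro u v _ _ _; rfl
    · simp only [List.length_nil, Nat.cast_zero, Finset.sum_const_zero, zero_div]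
      rw [Filter.liminf_const]
      norm_num
  · -- main case
    obtain ⟨w, hw⟩ := not_forall.1 hx
    have hq2 : 2 ≤ Fintype.card A := by omega
    have hnt : Nontrivial A := Fintype.one_lt_card_iff_nontrivial.mp hq2
    obtain ⟨a0, a1, hne⟩ := exists_pair_ne A
    set q : ℕ := Fintype.card A with hqdef
    have hNe : Nonempty A := ⟨x 0⟩
    set d : A := x 0 with hddef
    set ℓ : ℕ := w.length with hldef
    have hq1R : (1:ℝ) ≤ (q:ℝ) := by exact_mod_cast (by omega : 1 ≤ q)
    -- ℓ ≥ 1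
    have hl1 : 1 ≤ ℓ := by
      by_contra hcon
      have hwnil : w = [] := List.length_eq_zero_iff.mp (by omega)
      apply hw
      rw [hwnil]
      have he : (fun n : ℕ => (1:ℝ) + (n:ℝ)⁻¹) =ᶠ[atTop]
          (fun n : ℕ => ((occ (pref x n) ([]:List A) : ℝ) / n)) := by
        filter_upwards [eventually_gt_atTop 0] with n hn
        rw [occ_nil]
        have hn0 : (n:ℝ) ≠ 0 := by positivity
        push_cast
        field_simp
      have h1 : Tendsto (fun n : ℕ => (1:ℝ) + (n:ℝ)⁻¹) atTop (nhds 1) := by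
        simpa using tendsto_const_nhds.add (tendsto_inv_atTop_nhds_zero_nat (𝕜 := ℝ))
      rw [show (((q:ℕ):ℝ)^ℓ)⁻¹ = 1 by rw [(by omega : ℓ = 0)]; norm_num]
      exact Filter.Tendsto.congr' he h1
    -- extract a deviation ε and a subsequence
    rw [Metric.tendsto_atTop] at hw
    push_neg at hw
    obtain ⟨ε₀, hε₀pos, hfreq₀⟩ := hw
    set ε : ℝ := min ε₀ 1 with hεdef
    have hεpos : 0 < ε := lt_min hε₀pos one_pos
    have hε1 : ε ≤ 1 := min_le_right _ _
    have hfreq : ∀ N : ℕ, ∃ n ≥ N,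
        ε ≤ |((occ (pref x n) w : ℝ) / n) - (((q:ℕ):ℝ)^ℓ)⁻¹| := by
      intro N
      obtain ⟨n, hn, h⟩ := hfreq₀ N
      exact ⟨n, hn, le_trans (min_le_left _ _) (by rwa [Real.dist_eq] at h)⟩
    -- parameters
    set δ : ℝ := ε / 16 with hδdef
    have hδpos : 0 < δ := by positivity
    set s : ℕ := ⌈(8:ℝ)/ε⌉₊ + 1 with hsdef
    have hs8 : (8:ℝ)/ε ≤ (s:ℕ) := le_trans (Nat.le_ceil _) (by rw [hsdef]; push_cast; linarith)
    set k : ℕ := ⌈(2*ℓ*((q:ℕ):ℝ)^s)/δ^2⌉₊ + ⌈(8*(ℓ:ℝ))/ε⌉₊ + 2*ℓ + s + 1 with hkdef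
    have hk1 : 1 ≤ k := by omega
    have hk2ℓ : 2*ℓ ≤ k := by omega
    have hsk : s ≤ k := by omega
    have hℓk : ℓ ≤ k := by omega
    have hkR : (0:ℝ) < (k:ℝ) := by exact_mod_cast hk1
    have hkbig : 2*ℓ*((q:ℕ):ℝ)^s ≤ δ^2*k := by
      have h1 : ((2*ℓ*((q:ℕ):ℝ)^s)/δ^2) ≤ (⌈(2*ℓ*((q:ℕ):ℝ)^s)/δ^2⌉₊ : ℝ) := Nat.le_ceil _
      have h2 : ((⌈(2*ℓ*((q:ℕ):ℝ)^s)/δ^2⌉₊ : ℕ) : ℝ) ≤ (k:ℝ) := by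
        exact_mod_cast (by omega : ⌈(2*ℓ*((q:ℕ):ℝ)^s)/δ^2⌉₊ ≤ k)
      have hδ2 : (0:ℝ) < δ^2 := by positivity
      rw [div_le_iff₀ hδ2] at h1
      nlinarith
    have hk8ℓ : 8*(ℓ:ℝ) ≤ ε*k := by
      have h1 : ((8*(ℓ:ℝ))/ε) ≤ (⌈(8*(ℓ:ℝ))/ε⌉₊ : ℝ) := Nat.le_ceil _
      have h2 : ((⌈(8*(ℓ:ℝ))/ε⌉₊ : ℕ) : ℝ) ≤ (k:ℝ) := by
        exact_mod_cast (by omega : ⌈(8*(ℓ:ℝ))/ε⌉₊ ≤ k)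
      rw [div_le_iff₀ hεpos] at h1
      nlinarith
    set wg : ℕ → A := fun t => w.getD t d with hwgdef
    set E : ℝ := ((k - ℓ + 1 : ℕ) : ℝ) / ((q:ℕ):ℝ)^ℓ with hEdef
    set Tp : (Fin k → A) → Prop := fun v => δ*(k:ℝ) ≤ |(phi d wg ℓ k v : ℝ) - E| with hTpdef
    -- the set of atypical words is small; get an embedding into shorter words
    have hTcard : Nat.card {v : Fin k → A // Tp v} ≤ q^(k-s) :=
      card_dev_le d wg ℓ k s δ hl1 hk2ℓ hsk hδpos hk1 hkbig
    have hcardle : Fintype.card {v : Fin k → A // Tp v}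
        ≤ Fintype.card (Fin (k-s) → A) := by
      rw [← Nat.card_eq_fintype_card, Fintype.card_fun, Fintype.card_fin]
      exact hTcard
    obtain ⟨emb⟩ := Function.Embedding.nonempty_of_card_le hcardle
    -- the code
    set code : (Fin k → A) → List A :=
      fun v => if h : Tp v then a1 :: List.ofFn (emb ⟨v, h⟩) else a0 :: List.ofFn v with hcodedef
    set c : List A → List A :=
      fun u => if h : u.length = k then
        code (fun i : Fin k => u.get (Fin.cast h.symm i)) else [] with hcdef
    have hcodelen : ∀ v, (code v).length + (if Tp v then s else 0) = k + 1 := by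
      intro v
      rw [hcodedef]
      by_cases h : Tp v
      · simp only [h, dif_pos, if_pos, List.length_cons, List.length_ofFn]
        omega
      · simp only [h, dif_neg, if_neg, not_false_iff, List.length_cons, List.length_ofFn]
    have hcodeinj : ∀ v v', code v = code v' → v = v' := by
      intro v v' h
      rw [hcodedef] at h
      by_cases h1 : Tp v <;> by_cases h2 : Tp v' <;>
        simp only [h1, h2, dif_pos, dif_neg, not_false_iff, List.cons.injEq] at h
      · have := emb.injective (List.ofFn_injective h.2)
        exact congrArg Subtype.val this
      · exact absurd h.1.symm hne
      · exact absurd h.1 hne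
      · exact List.ofFn_injective h.2
    have hcodepfx : ∀ v v', code v <+: code v' → code v = code v' := by
      intro v v' h
      have hlen : (code v).length = (code v').length := by
        have e1 := hcodelen v
        have e2 := hcodelen v'
        rw [hcodedef] at h ⊢
        by_cases h1 : Tp v <;> by_cases h2 : Tp v' <;>
          simp only [h1, h2, dif_pos, dif_neg, not_false_iff] at h ⊢
        · simp [List.length_ofFn]
        · exact absurd (List.cons_prefix_cons.mp h).1.symm hne
        · exact absurd (List.cons_prefix_cons.mp h).1 hne
        · simp [List.length_ofFn]
      exact List.IsPrefix.eq_of_length h hlen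
    have hcu : ∀ u : List A, ∀ h : u.length = k,
        c u = code (fun i : Fin k => u.get (Fin.cast h.symm i)) := by
      intro u h
      rw [hcdef]
      simp only [h, dif_pos]
    refine ⟨k, hk1, c, ?_, ?_, ?_⟩
    · -- injectivity
      intro u v hu hv h
      rw [hcu u hu, hcu v hv] at h
      have hvv := hcodeinj _ _ h
      apply List.ext_getElem (hu.trans hv.symm)
      intro i h1 h2
      have := congrFun hvv ⟨i, hu ▸ h1⟩
      simpa [List.get_eq_getElem] using this
    · -- prefix-freeness
      intro u v hu hv h
      rw [hcu u hu, hcu v hv] at h ⊢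
      exact hcodepfx _ _ h
    · -- compression
      -- the blocks
      set v : ℕ → (Fin k → A) := fun j => fun i : Fin k => x (j*k + (i:ℕ)) with hvdef
      have hblock : ∀ j, c ((List.range k).map (fun i => x (j * k + i))) = code (v j) := by
        intro j
        have hlen : ((List.range k).map (fun i => x (j * k + i))).length = k := by simp
        rw [hcu _ hlen]
        congr 1
        funext i
        simp [hvdef, List.get_eq_getElem]
      set fn : ℕ → ℝ := fun n => ((∑ j ∈ Finset.range n,
          (c ((List.range k).map (fun i => x (j * k + i)))).length : ℝ)) / (n * k) with hfndef
      show Filter.liminf fn atTop < 1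
      have hfnnonneg : ∀ n : ℕ, 0 ≤ fn n := by
        intro n
        rw [hfndef]
        apply div_nonneg
        · exact Finset.sum_nonneg fun j _ => Nat.cast_nonneg _
        · exact mul_nonneg (Nat.cast_nonneg _) (Nat.cast_nonneg _)
      have hbdd : Filter.IsBoundedUnder (· ≥ ·) atTop fn :=
        ⟨0, Filter.eventually_map.2 (Filter.Eventually.of_forall (fun n => hfnnonneg n))⟩
      have hfin : ∃ᶠ n in atTop, fn n ≤ 1 - 1/(k:ℝ) := by
        rw [Filter.frequently_atTop]
        intro M
        set m0 : ℕ := ⌈(12:ℝ)/ε⌉₊ + 1 with hm0def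
        obtain ⟨n, hnN, hdev⟩ := hfreq (k*(M + m0))
        refine ⟨n / k, ?_, ?_⟩
        · -- n/k ≥ M
          have : M + m0 ≤ n / k := by
            rw [Nat.le_div_iff_mul_le hk1]
            calc (M + m0) * k = k * (M + m0) := by ring
              _ ≤ n := hnN
          omega
        set m : ℕ := n / k with hmdef
        have hMm : M + m0 ≤ m := by
          rw [hmdef, Nat.le_div_iff_mul_le hk1]
          calc (M + m0) * k = k * (M + m0) := by ring
            _ ≤ n := hnN
        have hm1 : 1 ≤ m := by omega
        have hmk_le : m*k ≤ n := Nat.div_mul_le_self n k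
        have hn_lt : n < m*k + k := by
          have h2 := Nat.mod_lt n (show 0 < k from hk1)
          have h1 := Nat.div_add_mod n k
          calc n = k * (n/k) + n % k := h1.symm
            _ < k * (n/k) + k := by omega
            _ = m*k + k := by rw [hmdef]; ring_nf
        have hmR : (12:ℝ)/ε ≤ (m:ℝ) := by
          have h1 : (12:ℝ)/ε ≤ (m0:ℕ) := by
            rw [hm0def]; push_cast
            have hcl := Nat.le_ceil ((12:ℝ)/ε)
            linarith only [hcl]
          have h2 : ((m0:ℕ):ℝ) ≤ m := by exact_mod_cast (by omega : m0 ≤ m)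
          linarith only [h1, h2]
        -- counting quantities
        set Φ : ℕ := ∑ j ∈ Finset.range m, phi d wg ℓ k (v j) with hPhidef
        set a : ℕ := cnt (fun j => Tp (v j)) m with hadef
        set Cm : ℕ := cnt (matc wg ℓ x) (m*k) with hCmdef
        set Cn : ℕ := cnt (matc wg ℓ x) (n - ℓ + 1) with hCndef
        have hℓn : ℓ ≤ n := by
          have h1 : k ≤ k * (M + m0) := Nat.le_mul_of_pos_right k (by omega)
          omega
        have hocc : occ (pref x n) w = Cn := by
          rw [occ_eq_cnt x w d n hl1 hℓn, hCndef]
          exact cnt_congr (fun i _ => Iff.rfl)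
        have hphig : ∀ j, phi d wg ℓ k (v j)
            = cnt (fun i => matc wg ℓ x (j*k + i)) (k - ℓ + 1) := by
          intro j
          rw [phi]
          apply cnt_congr
          intro i hi
          constructor
          · intro h t ht
            have h2 := h t ht
            rw [vext, dif_pos (by omega : i + t < k)] at h2
            simp only [hvdef] at h2
            rw [show j*k + i + t = j*k + (i+t) from by omega]
            exact h2
          · intro h t ht
            rw [vext, dif_pos (by omega : i + t < k)]
            simp only [hvdef]
            rw [show j*k + (i+t) = j*k + i + t from by omega]
            exact h t ht
        have hCm_split : Cm = ∑ j ∈ Finset.range m, cnt (fun i => matc wg ℓ x (j*k + i)) k := by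
          rw [hCmdef, cnt_mul_split]
        have hΦCm1 : Φ ≤ Cm := by
          rw [hCm_split, hPhidef]
          apply Finset.sum_le_sum
          intro j _
          rw [hphig j]
          exact cnt_mono _ (by omega)
        have hΦCm2 : Cm ≤ Φ + m*ℓ := by
          rw [hCm_split, hPhidef]
          calc ∑ j ∈ Finset.range m, cnt (fun i => matc wg ℓ x (j*k + i)) k
              ≤ ∑ j ∈ Finset.range m, (phi d wg ℓ k (v j) + ℓ) := by
                apply Finset.sum_le_sum
                intro j _
                have h1 := cnt_sub_le (fun i => matc wg ℓ x (j*k + i)) (k - ℓ + 1) k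
                have h3 := cnt_mono (fun i => matc wg ℓ x (j*k+i)) (show k-ℓ+1 ≤ k by omega)
                rw [hphig j]
                omega
            _ = Φ + m*ℓ := by
                rw [Finset.sum_add_distrib, Finset.sum_const, Finset.card_range,
                  smul_eq_mul, hPhidef]
        have hCnCm : Cn ≤ Cm + (k + ℓ) ∧ Cm ≤ Cn + (k + ℓ) := by
          have h1 := cnt_sub_le (matc wg ℓ x) (m*k) (n - ℓ + 1)
          have h2 := cnt_sub_le (matc wg ℓ x) (n - ℓ + 1) (m*k)
          have h3 := cnt_mono (matc wg ℓ x) (le_max_left (m*k) (n - ℓ + 1))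
          rw [← hCmdef, ← hCndef] at h1 h2
          rcases le_total (m*k) (n - ℓ + 1) with hc | hc
          · have h4 := cnt_mono (matc wg ℓ x) hc
            rw [← hCmdef, ← hCndef] at h4
            have h5 : (n - ℓ + 1) - m*k ≤ k := by omega
            omega
          · have h4 := cnt_mono (matc wg ℓ x) hc
            rw [← hCmdef, ← hCndef] at h4
            have h5 : m*k - (n - ℓ + 1) ≤ ℓ := by omega
            omega
        -- real estimates
        set Lr : ℝ := (((q:ℕ):ℝ)^ℓ)⁻¹ with hLrdef
        have hqℓ1 : (1:ℝ) ≤ ((q:ℕ):ℝ)^ℓ := one_le_pow₀ hq1R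
        have hLr0 : 0 ≤ Lr := by rw [hLrdef]; positivity
        have hLr1 : Lr ≤ 1 := by rw [hLrdef]; exact inv_le_one_of_one_le₀ hqℓ1
        have hn0 : (0:ℝ) < (n:ℝ) := by
          have : 1 ≤ n := by omega
          exact_mod_cast this
        have hdevn : ε * n ≤ |(Cn:ℝ) - n * Lr| := by
          have hoccR : ((occ (pref x n) w : ℕ) : ℝ) = (Cn:ℝ) := by exact_mod_cast hocc
          have hstep : (Cn:ℝ)/n - Lr = ((Cn:ℝ) - n*Lr)/n := by field_simp
          rw [hoccR, hstep, abs_div, abs_of_pos hn0, le_div_iff₀ hn0] at hdev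
          exact hdev
        have hc1 : (Cn:ℝ) ≤ (Cm:ℝ) + (k + ℓ) := by exact_mod_cast hCnCm.1
        have hc2 : (Cm:ℝ) ≤ (Cn:ℝ) + (k + ℓ) := by exact_mod_cast hCnCm.2
        have hb1 : |(Cn:ℝ) - Cm| ≤ (k:ℝ) + ℓ := abs_le.2 ⟨by linarith only [hc1, hc2], by linarith only [hc1, hc2]⟩
        have hp1 : (Φ:ℝ) ≤ (Cm:ℝ) := by exact_mod_cast hΦCm1
        have hp2 : (Cm:ℝ) ≤ (Φ:ℝ) + m*ℓ := by exact_mod_cast hΦCm2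
        have hb2 : |(Cm:ℝ) - Φ| ≤ (m:ℝ)*ℓ := abs_le.2 ⟨by nlinarith only [hp1, hp2, (Nat.cast_nonneg m : (0:ℝ) ≤ (m:ℝ)), (Nat.cast_nonneg ℓ : (0:ℝ) ≤ (ℓ:ℝ))], by linarith only [hp1, hp2, mul_nonneg (Nat.cast_nonneg m : (0:ℝ) ≤ (m:ℝ)) (Nat.cast_nonneg ℓ : (0:ℝ) ≤ (ℓ:ℝ))]⟩
        have hmkn : ((m:ℝ)*k) ≤ (n:ℝ) := by exact_mod_cast hmk_le
        have hnmk : (n:ℝ) < (m:ℝ)*k + k := by exact_mod_cast hn_lt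
        have hb3 : |(m:ℝ)*k*Lr - n*Lr| ≤ (k:ℝ) := by
          have hdec : (m:ℝ)*k*Lr - n*Lr = -(((n:ℝ) - m*k)*Lr) := by ring
          rw [hdec, abs_neg, abs_of_nonneg (by nlinarith only [hmkn, hLr0])]
          nlinarith only [hmkn, hnmk, hLr0, hLr1]
        have hℓkR : (ℓ:ℝ) ≤ (k:ℝ) := by exact_mod_cast hℓk
        have hl1R : (1:ℝ) ≤ (ℓ:ℝ) := by exact_mod_cast hl1
        have hcastk : ((k - ℓ + 1 : ℕ) : ℝ) = (k:ℝ) - ℓ + 1 := by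
          push_cast [hℓk]
          ring
        have hqℓ0 : ((q:ℕ):ℝ)^ℓ ≠ 0 := by positivity
        have hb4 : |(m:ℝ)*E - m*k*Lr| ≤ (m:ℝ)*ℓ := by
          have hdec : (m:ℝ)*E - m*k*Lr = -((m:ℝ)*((ℓ:ℝ) - 1) * Lr) := by
            rw [hEdef, hLrdef, hcastk]
            field_simp
            ring
          have hm0' : (0:ℝ) ≤ (m:ℝ) := Nat.cast_nonneg m
          have t0 : (0:ℝ) ≤ (m:ℝ)*((ℓ:ℝ) - 1) := mul_nonneg hm0' (by linarith only [hl1R])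
          rw [hdec, abs_neg, abs_of_nonneg (mul_nonneg t0 hLr0)]
          have t1 : (m:ℝ)*((ℓ:ℝ) - 1)*Lr ≤ (m:ℝ)*((ℓ:ℝ) - 1)*1 :=
            mul_le_mul_of_nonneg_left hLr1 t0
          nlinarith only [t1, hm0']
        have hdecomp : (Cn:ℝ) - n*Lr = ((Cn:ℝ)-Cm) + (((Cm:ℝ)-Φ) + (((Φ:ℝ)-m*E)
            + (((m:ℝ)*E-m*k*Lr) + ((m:ℝ)*k*Lr-n*Lr)))) := by ring
        have i1 := abs_add_le ((m:ℝ)*E-m*k*Lr) ((m:ℝ)*k*Lr-n*Lr)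
        have i2 := abs_add_le ((Φ:ℝ)-m*E) (((m:ℝ)*E-m*k*Lr) + ((m:ℝ)*k*Lr-n*Lr))
        have i3 := abs_add_le ((Cm:ℝ)-Φ) (((Φ:ℝ)-m*E) + (((m:ℝ)*E-m*k*Lr) + ((m:ℝ)*k*Lr-n*Lr)))
        have i4 := abs_add_le ((Cn:ℝ)-Cm) (((Cm:ℝ)-Φ) + (((Φ:ℝ)-m*E)
            + (((m:ℝ)*E-m*k*Lr) + ((m:ℝ)*k*Lr-n*Lr))))
        have key : ε*(n:ℝ) - ((k:ℝ)+ℓ) - (m:ℝ)*ℓ - (m:ℝ)*ℓ - k ≤ |(Φ:ℝ) - m*E| := by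
          have habs : |(Cn:ℝ) - n*Lr| ≤ |(Cn:ℝ)-Cm| + |(Cm:ℝ)-Φ| + |(Φ:ℝ)-m*E|
              + |(m:ℝ)*E-m*k*Lr| + |(m:ℝ)*k*Lr-n*Lr| := by
            rw [hdecomp]
            linarith only [i1, i2, i3, i4]
          linarith only [hdevn, hb1, hb2, hb4, hb3, habs]
        -- counting step
        have hphile : ∀ u : Fin k → A, (phi d wg ℓ k u : ℝ) ≤ (k:ℝ) := by
          intro u
          have h1 : phi d wg ℓ k u ≤ k - ℓ + 1 := cnt_le _ _
          have h2 : k - ℓ + 1 ≤ k := by omega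
          exact_mod_cast le_trans h1 h2
        have hE0 : 0 ≤ E := by rw [hEdef]; positivity
        have hEk : E ≤ (k:ℝ) := by
          rw [hEdef]
          calc ((k - ℓ + 1 : ℕ):ℝ) / ((q:ℕ):ℝ)^ℓ ≤ ((k - ℓ + 1 : ℕ):ℝ) :=
              div_le_self (Nat.cast_nonneg _) hqℓ1
            _ ≤ (k:ℝ) := by exact_mod_cast (by omega : k - ℓ + 1 ≤ k)
        have hcount : |(Φ:ℝ) - m*E| ≤ (a:ℝ)*k + m*(δ*k) := by
          have hsplit : (Φ:ℝ) - m*E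
              = ∑ j ∈ Finset.range m, ((phi d wg ℓ k (v j) : ℝ) - E) := by
            rw [Finset.sum_sub_distrib, Finset.sum_const, Finset.card_range, hPhidef]
            push_cast
            ring
          rw [hsplit]
          refine le_trans (Finset.abs_sum_le_sum_abs _ _) ?_
          have hterm : ∀ j ∈ Finset.range m, |(phi d wg ℓ k (v j) : ℝ) - E|
              ≤ (if Tp (v j) then ((k:ℝ)) else 0) + δ*k := by
            intro j _
            by_cases h : Tp (v j)
            · rw [if_pos h]
              have h1 := hphile (v j)
              have h2 : (0:ℝ) ≤ (phi d wg ℓ k (v j) : ℝ) := Nat.cast_nonneg _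
              have h3 : 0 ≤ δ*(k:ℝ) := by positivity
              have := abs_le.2 (show -((k:ℝ)) ≤ (phi d wg ℓ k (v j) : ℝ) - E
                  ∧ (phi d wg ℓ k (v j) : ℝ) - E ≤ (k:ℝ) from
                    ⟨by linarith only [h2, hEk], by linarith only [h1, hE0]⟩)
              linarith only [this, h3]
            · rw [if_neg h]
              simp only [hTpdef, not_le] at h
              have h4 : (0:ℝ) ≤ (k:ℝ) := Nat.cast_nonneg k
              nlinarith only [le_of_lt h]
          refine le_trans (Finset.sum_le_sum hterm) ?_
          rw [Finset.sum_add_distrib, Finset.sum_const, Finset.card_range, nsmul_eq_mul]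
          have hsum_ite : ∑ j ∈ Finset.range m, (if Tp (v j) then ((k:ℝ)) else 0)
              = (a:ℝ)*k := by
            rw [← Finset.sum_filter, Finset.sum_const, nsmul_eq_mul]
            have hcard : (Finset.filter (fun j => Tp (v j)) (Finset.range m)).card = a := by
              rw [hadef, cnt_eq_card]
            rw [hcard]
          rw [hsum_ite]
        -- lower bound on the number of atypical blocks
        have hεn : ε*((m:ℝ)*k) ≤ ε*n := mul_le_mul_of_nonneg_left hmkn (le_of_lt hεpos)
        have h2mℓ : (m:ℝ)*(8*(ℓ:ℝ)) ≤ (m:ℝ)*(ε*k) :=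
          mul_le_mul_of_nonneg_left hk8ℓ (Nat.cast_nonneg m)
        have h3ak : ((ε/2)*(m:ℝ) - 3)*(k:ℝ) ≤ (a:ℝ)*k := by
          rw [hδdef] at hcount
          nlinarith only [key, hcount, hεn, h2mℓ, hℓkR, hδpos, hεpos,
            (Nat.cast_nonneg m : (0:ℝ) ≤ (m:ℝ)), (Nat.cast_nonneg ℓ : (0:ℝ) ≤ (ℓ:ℝ)), hkR]
        have h4a : (ε/2)*(m:ℝ) - 3 ≤ (a:ℝ) := le_of_mul_le_mul_right h3ak hkR
        have h5 : (3:ℝ) ≤ (ε/4)*m := by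
          rw [div_le_iff₀ hεpos] at hmR
          nlinarith only [hmR]
        have h6 : (ε/4)*(m:ℝ) ≤ (a:ℝ) := by linarith only [h4a, h5]
        have h7 : (8:ℝ) ≤ (s:ℕ)*ε := by
          rw [div_le_iff₀ hεpos] at hs8
          linarith only [hs8]
        have hask : (2:ℝ)*m ≤ (a:ℝ)*s := by
          have p1 := mul_le_mul_of_nonneg_right h7 (show (0:ℝ) ≤ (m:ℝ)/4 by positivity)
          have p2 := mul_le_mul_of_nonneg_right h6 (Nat.cast_nonneg s : (0:ℝ) ≤ (s:ℕ))
          nlinarith only [p1, p2]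
        -- sum of code lengths
        have hsum_code : (∑ j ∈ Finset.range m, (code (v j)).length) + s*a = m*(k+1) := by
          have h1 : s*a = ∑ j ∈ Finset.range m, (if Tp (v j) then s else 0) := by
            rw [hadef, cnt, Finset.mul_sum]
            exact Finset.sum_congr rfl (fun j _ => by by_cases h : Tp (v j) <;> simp [h])
          rw [h1, ← Finset.sum_add_distrib,
            Finset.sum_congr rfl (fun j _ => hcodelen (v j)),
            Finset.sum_const, Finset.card_range, smul_eq_mul]
        have hfnle : fn m ≤ 1 - 1/(k:ℝ) := by
          rw [hfndef]
          simp only []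
          have hsum_eq : (∑ j ∈ Finset.range m,
              ((c ((List.range k).map (fun i => x (j * k + i)))).length : ℝ))
              = ((∑ j ∈ Finset.range m, (code (v j)).length : ℕ) : ℝ) := by
            push_cast
            exact Finset.sum_congr rfl (fun j _ => by rw [hblock j])
          rw [hsum_eq]
          have hcastsum : ((∑ j ∈ Finset.range m, (code (v j)).length : ℕ) : ℝ)
              + (s:ℕ)*(a:ℝ) = (m:ℝ)*((k:ℝ)+1) := by exact_mod_cast hsum_code
          have hub : ((∑ j ∈ Finset.range m, (code (v j)).length : ℕ) : ℝ)
              ≤ (m:ℝ)*k - m := by nlinarith only [hask, hcastsum]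
          have hm0R : (0:ℝ) < (m:ℝ) := by exact_mod_cast hm1
          have hmk0 : (0:ℝ) < (m:ℝ)*k := by positivity
          rw [div_le_iff₀ hmk0]
          have hexpand : (1 - 1/(k:ℝ))*((m:ℝ)*k) = (m:ℝ)*k - m := by
            field_simp
          rw [hexpand]
          exact hub
        exact hfnle
      have hfinal := Filter.liminf_le_of_frequently_le hfin hbdd
      have hik : (0:ℝ) < 1/(k:ℝ) := by positivity
      linarith only [hfinal, hik]
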